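/- Let xL, xU, yL, yU ∈ ℝ with xL ≤ xU and yL ≤ yU. Then the convex hull in ℝ³ of the set {(x, y, x·y) : xL ≤ x ≤ xU, yL ≤ y ≤ yU} equals the polytope of points (x, y, w) ∈ ℝ³ satisfying xL ≤ x ≤ xU, yL ≤ y ≤ yU, w ≥ xL·y + x·yL − xL·yL, w ≥ xU·y + x·yU − xU·yU, w ≤ xU·y + x·yL − xU·yL, and w ≤ xL·y + x·yU − xL·yU. -/
import Mathlib


set_option maxHeartbeats 1000000 in
/-- The McCormick envelope is the convex hull of the graph of
the bilinear term `w = x·y` over the box `[xL, xU] × [yL, yU]`: the convex hull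
in `ℝ³` of `{(x, y, x·y) : xL ≤ x ≤ xU, yL ≤ y ≤ yU}` equals the polytope cut
out by the box bounds together with the four McCormick inequalities. -/
theorem mccormick_envelope_eq_convexHull
    (xL xU yL yU : ℝ) (hx : xL ≤ xU) (hy : yL ≤ yU) :
    convexHull ℝ
        {p : ℝ × ℝ × ℝ |
          xL ≤ p.1 ∧ p.1 ≤ xU ∧ yL ≤ p.2.1 ∧ p.2.1 ≤ yU ∧ p.2.2 = p.1 * p.2.1} =
      {p : ℝ × ℝ × ℝ |
        xL ≤ p.1 ∧ p.1 ≤ xU ∧ yL ≤ p.2.1 ∧ p.2.1 ≤ yU ∧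
        xL * p.2.1 + p.1 * yL - xL * yL ≤ p.2.2 ∧
        xU * p.2.1 + p.1 * yU - xU * yU ≤ p.2.2 ∧
        p.2.2 ≤ xU * p.2.1 + p.1 * yL - xU * yL ∧
        p.2.2 ≤ xL * p.2.1 + p.1 * yU - xL * yU} := by
  apply Set.Subset.antisymm
  · apply convexHull_min
    · rintro ⟨x, y, w⟩ ⟨h1, h2, h3, h4, h5⟩
      simp only [Set.mem_setOf_eq] at *
      subst h5
      refine ⟨h1, h2, h3, h4, ?_, ?_, ?_, ?_⟩ <;>
        nlinarith [mul_nonneg (sub_nonneg.2 h1) (sub_nonneg.2 h3),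
          mul_nonneg (sub_nonneg.2 h2) (sub_nonneg.2 h4),
          mul_nonneg (sub_nonneg.2 h1) (sub_nonneg.2 h4),
          mul_nonneg (sub_nonneg.2 h2) (sub_nonneg.2 h3)]
    · rintro p hp q hq a b ha hb hab
      obtain ⟨hp1, hp2, hp3, hp4, hp5, hp6, hp7, hp8⟩ := hp
      obtain ⟨hq1, hq2, hq3, hq4, hq5, hq6, hq7, hq8⟩ := hq
      simp only [Set.mem_setOf_eq, Prod.fst_add, Prod.snd_add, Prod.smul_fst,
        Prod.smul_snd, smul_eq_mul]
      have hone : ∀ r : ℝ, a * r + b * r = r := fun r => by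
        rw [← add_mul, hab, one_mul]
      refine ⟨?_, ?_, ?_, ?_, ?_, ?_, ?_, ?_⟩
      · linarith [mul_le_mul_of_nonneg_left hp1 ha, mul_le_mul_of_nonneg_left hq1 hb, hone xL]
      · linarith [mul_le_mul_of_nonneg_left hp2 ha, mul_le_mul_of_nonneg_left hq2 hb, hone xU]
      · linarith [mul_le_mul_of_nonneg_left hp3 ha, mul_le_mul_of_nonneg_left hq3 hb, hone yL]
      · linarith [mul_le_mul_of_nonneg_left hp4 ha, mul_le_mul_of_nonneg_left hq4 hb, hone yU]
      · linarith [mul_le_mul_of_nonneg_left hp5 ha, mul_le_mul_of_nonneg_left hq5 hb,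
          hone (xL * yL)]
      · linarith [mul_le_mul_of_nonneg_left hp6 ha, mul_le_mul_of_nonneg_left hq6 hb,
          hone (xU * yU)]
      · linarith [mul_le_mul_of_nonneg_left hp7 ha, mul_le_mul_of_nonneg_left hq7 hb,
          hone (xU * yL)]
      · linarith [mul_le_mul_of_nonneg_left hp8 ha, mul_le_mul_of_nonneg_left hq8 hb,
          hone (xL * yU)]
  · rintro ⟨x, y, w⟩ ⟨h1, h2, h3, h4, h5, h6, h7, h8⟩
    simp only [Set.mem_setOf_eq] at *
    rcases eq_or_lt_of_le hx with hs | hs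
    · -- degenerate: xL = xU, so x = xL and w = x * y
      subst hs
      have hxx : x = xL := le_antisymm h2 h1
      subst hxx
      have hw : w = x * y := by linarith
      exact subset_convexHull ℝ _ ⟨h1, h2, h3, h4, hw⟩
    rcases eq_or_lt_of_le hy with ht | ht
    · -- degenerate: yL = yU, so y = yL and w = x * y
      subst ht
      have hyy : y = yL := le_antisymm h4 h3
      subst hyy
      have hw : w = x * y := by linarith
      exact subset_convexHull ℝ _ ⟨h1, h2, h3, h4, hw⟩
    -- main case: express (x, y, w) as a convex combination of the four corners
    set n : Fin 4 → ℝ :=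
      ![w - xU * y - x * yU + xU * yU, xU * y + x * yL - xU * yL - w,
        xL * y + x * yU - xL * yU - w, w - xL * y - x * yL + xL * yL] with hn
    set c : Fin 4 → ℝ × ℝ × ℝ :=
      ![(xL, yL, xL * yL), (xL, yU, xL * yU), (xU, yL, xU * yL), (xU, yU, xU * yU)] with hc
    have hw0 : ∀ i ∈ Finset.univ, 0 ≤ n i := by
      intro i _
      fin_cases i
      · exact (by linarith : (0:ℝ) ≤ w - xU * y - x * yU + xU * yU)
      · exact (by linarith : (0:ℝ) ≤ xU * y + x * yL - xU * yL - w)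
      · exact (by linarith : (0:ℝ) ≤ xL * y + x * yU - xL * yU - w)
      · exact (by linarith : (0:ℝ) ≤ w - xL * y - x * yL + xL * yL)
    have hsum : ∑ i ∈ Finset.univ, n i = (xU - xL) * (yU - yL) := by
      simp [hn, Fin.sum_univ_four]; ring
    have hws : 0 < ∑ i ∈ Finset.univ, n i := by
      rw [hsum]; exact mul_pos (sub_pos.2 hs) (sub_pos.2 ht)
    have hz : ∀ i ∈ Finset.univ, c i ∈
        {p : ℝ × ℝ × ℝ |
          xL ≤ p.1 ∧ p.1 ≤ xU ∧ yL ≤ p.2.1 ∧ p.2.1 ≤ yU ∧ p.2.2 = p.1 * p.2.1} := by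
      intro i _
      fin_cases i
      · exact ⟨le_refl xL, hx, le_refl yL, hy, rfl⟩
      · exact ⟨le_refl xL, hx, hy, le_refl yU, rfl⟩
      · exact ⟨hx, le_refl xU, le_refl yL, hy, rfl⟩
      · exact ⟨hx, le_refl xU, hy, le_refl yU, rfl⟩
    have hmem := Finset.centerMass_mem_convexHull Finset.univ hw0 hws hz
    have hD : (xU - xL) * (yU - yL) ≠ 0 :=
      ne_of_gt (mul_pos (sub_pos.2 hs) (sub_pos.2 ht))
    have heq : Finset.univ.centerMass n c = (x, y, w) := by
      rw [Finset.centerMass, hsum]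
      simp only [hn, hc, Fin.sum_univ_four, Matrix.cons_val_zero, Matrix.cons_val_one,
        Matrix.head_cons, Matrix.cons_val_two, Matrix.tail_cons, Matrix.cons_val_three,
        Prod.smul_mk, Prod.mk_add_mk, smul_eq_mul, Prod.mk.injEq]
      refine ⟨?_, ?_, ?_⟩ <;> field_simp <;> ring
    rwa [heq] at hmem
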